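/- arXiv:1109.3526 — 2 statements merged into one kernel-verified Lean document; each statement's English description precedes it below -/
import Mathlib

section
/- Define f_n(t) = (1 − t)^n · Σ_{j=0}^{n−1} t^j · C(n+j−1, j). Let K be a compact subset of {t ∈ ℂ : |t(1−t)| < 1/4 and Re(t) < 1/2}. Then f_n → 1 uniformly on K as n → ∞. Similarly, if K is a compact subset of {t ∈ ℂ : |t(1−t)| < 1/4 and Re(t) > 1/2}, then f_n → 0 uniformly on K. -/
open Filter
open Finset

/-- `f_n(t) = (1-t)^n ∑_{j=0}^{n-1} t^j C(n+j-1,j)`, the ensemble average polynomial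
after the substitution `t = z/β`. -/
noncomputable def fEns (n : ℕ) (t : ℂ) : ℂ :=
  (1 - t) ^ n * ∑ j ∈ Finset.range n, t ^ j * (Nat.choose (n + j - 1) j : ℂ)

lemma mychoose_le_two_pow (n k : ℕ) : n.choose k ≤ 2^n := by
  rcases le_or_gt k n with h | h
  · calc n.choose k ≤ ∑ m ∈ range (n+1), n.choose m :=
        Finset.single_le_sum (fun i _ => Nat.zero_le _) (mem_range.mpr (by omega))
      _ = 2^n := Nat.sum_range_choose n
  · simp [Nat.choose_eq_zero_of_lt h]

lemma key (m : ℕ) (t : ℂ) :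
    (1 - t) * ∑ j ∈ range (m+2), ((m+1+j).choose j : ℂ) * t^j
    = (∑ j ∈ range (m+1), ((m+j).choose j : ℂ) * t^j)
      + ((2*m+1).choose (m+1) : ℂ) * t^(m+1)
      - 2 * ((2*m+1).choose (m+1) : ℂ) * t^(m+2) := by
  have pascal : ∀ j : ℕ, ((m+1+(j+1)).choose (j+1) : ℂ)
      = ((m+1+j).choose (j+1) : ℂ) + ((m+1+j).choose j : ℂ) := by
    intro j
    norm_cast
    rw [show m+1+(j+1) = (m+1+j)+1 from rfl, Nat.choose_succ_succ']
    omega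
  rw [sub_mul, one_mul, Finset.mul_sum]
  rw [Finset.sum_range_succ' (fun j => ((m+1+j).choose j : ℂ) * t^j) (m+1)]
  rw [Finset.sum_range_succ (fun j => t * (((m+1+j).choose j : ℂ) * t^j)) (m+1)]
  have hsplit : (∑ j ∈ range (m+1), ((m+1+(j+1)).choose (j+1) : ℂ) * t^(j+1))
      - ∑ j ∈ range (m+1), t * (((m+1+j).choose j : ℂ) * t^j)
      = ∑ j ∈ range (m+1), ((m+1+j).choose (j+1) : ℂ) * t^(j+1) := by
    rw [← Finset.sum_sub_distrib]
    refine Finset.sum_congr rfl fun j _ => ?_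
    rw [pascal j]; ring
  have hstep : ∑ j ∈ range (m+1), ((m+1+j).choose (j+1) : ℂ) * t^(j+1)
      = (∑ j ∈ range m, ((m+(j+1)).choose (j+1) : ℂ) * t^(j+1))
        + ((2*m+1).choose (m+1) : ℂ) * t^(m+1) := by
    rw [Finset.sum_range_succ]
    have e1 : ∀ j, m+1+j = m+(j+1) := fun j => by omega
    simp only [e1]
    rw [show m+(m+1) = 2*m+1 by omega]
  have hrhs : ∑ j ∈ range (m+1), ((m+j).choose j : ℂ) * t^j
      = (∑ j ∈ range m, ((m+(j+1)).choose (j+1) : ℂ) * t^(j+1)) + 1 := by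
    rw [Finset.sum_range_succ' (fun j => ((m+j).choose j : ℂ) * t^j) m]
    simp
  have hlast : ((m+1+(m+1)).choose (m+1) : ℂ) = 2 * ((2*m+1).choose (m+1) : ℂ) := by
    norm_cast
    rw [show m+1+(m+1) = (2*m+1)+1 by omega, Nat.choose_succ_succ', Nat.choose_symm_half]
    omega
  simp only [Nat.choose_zero_right, Nat.cast_one, pow_zero, mul_one, Nat.add_zero]
  rw [hrhs, hlast]
  linear_combination hsplit + hstep

lemma fEns_eq (n : ℕ) (t : ℂ) :
    fEns (n+1) t = (1 - t)^(n+1) * ∑ j ∈ range (n+1), ((n+j).choose j : ℂ) * t^j := by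
  unfold fEns
  congr 1
  refine Finset.sum_congr rfl fun j _ => ?_
  rw [show n+1+j-1 = n+j by omega]; ring

lemma rec_fEns (m : ℕ) (t : ℂ) :
    fEns (m+2) t = fEns (m+1) t
      + ((2*m+1).choose (m+1) : ℂ) * (t * (1-t))^(m+1) * (1 - 2*t) := by
  rw [show m+2 = (m+1)+1 from rfl, fEns_eq (m+1) t, fEns_eq m t]
  have h : (1-t)^(m+2) * ∑ j ∈ range (m+2), ((m+1+j).choose j : ℂ) * t^j
      = (1-t)^(m+1) * ((1-t) * ∑ j ∈ range (m+2), ((m+1+j).choose j : ℂ) * t^j) := by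
    ring
  rw [h, key m t, mul_pow]
  ring

lemma identity (m : ℕ) (t : ℂ) : fEns (m+1) t + fEns (m+1) (1-t) = 1 := by
  induction m with
  | zero => simp [fEns]
  | succ m ih =>
    rw [show m+1+1 = m+2 from rfl, rec_fEns m t, rec_fEns m (1-t),
      show (1 : ℂ) - (1-t) = t by ring]
    linear_combination ih

lemma bound (n : ℕ) (t : ℂ) (ht : 1/2 < t.re) :
    ‖fEns n t‖ ≤ n * (4 * ‖t * (1 - t)‖)^n := by
  obtain _ | m := n
  · simp [fEns]
  set a := ‖t‖ with ha'
  set b := ‖1 - t‖ with hb'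
  have ha : 1/2 < a := lt_of_lt_of_le ht (Complex.re_le_norm t)
  have hb : 0 ≤ b := norm_nonneg _
  have habs : ‖t * (1 - t)‖ = a * b := by rw [norm_mul]
  have hsum : ‖∑ j ∈ range (m+1), t^j * ((m+1+j-1).choose j : ℂ)‖
      ≤ (m+1) * (4*a)^m := by
    refine le_trans (norm_sum_le _ _) ?_
    have hterm : ∀ j ∈ range (m+1),
        ‖t^j * ((m+1+j-1).choose j : ℂ)‖ ≤ (4*a)^m := by
      intro j hj
      have hjm : j ≤ m := by simpa using Nat.lt_succ_iff.mp (mem_range.mp hj)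
      rw [norm_mul, norm_pow, Complex.norm_natCast, show m+1+j-1 = m+j by omega]
      calc a^j * ((m+j).choose j : ℝ) ≤ a^j * (2:ℝ)^(m+j) := by
            have := mychoose_le_two_pow (m+j) j
            gcongr
            exact_mod_cast this
        _ = 2^m * (2*a)^j := by rw [pow_add, mul_pow]; ring
        _ ≤ 2^m * (2*a)^m := by
            exact mul_le_mul_of_nonneg_left (pow_le_pow_right₀ (by linarith) hjm) (by positivity)
        _ = (4*a)^m := by rw [← mul_pow]; ring_nf
    calc ∑ j ∈ range (m+1), ‖t^j * ((m+1+j-1).choose j : ℂ)‖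
        ≤ ∑ _j ∈ range (m+1), (4*a)^m := Finset.sum_le_sum hterm
      _ = (m+1) * (4*a)^m := by rw [Finset.sum_const, card_range]; push_cast; ring
  have hmain : ‖fEns (m+1) t‖ ≤ b^(m+1) * ((m+1) * (4*a)^m) := by
    rw [fEns, norm_mul, norm_pow]
    gcongr
  refine hmain.trans ?_
  rw [habs]
  have hstep : (4*a)^m * b^(m+1) ≤ (4*(a*b))^(m+1) := by
    have he : (4*(a*b))^(m+1) = (4*a) * ((4*a)^m * b^(m+1)) := by
      rw [show (4:ℝ)*(a*b) = (4*a)*b by ring, mul_pow]; ring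
    rw [he]
    refine le_mul_of_one_le_left (by positivity) (by linarith)
  calc b^(m+1) * ((m+1) * (4*a)^m) = (m+1 : ℝ) * ((4*a)^m * b^(m+1)) := by ring
    _ ≤ (m+1 : ℝ) * (4*(a*b))^(m+1) := by
        refine mul_le_mul_of_nonneg_left hstep (by positivity)
    _ = (↑(m+1) : ℝ) * (4*(a*b))^(m+1) := by push_cast; ring

lemma core (K : Set ℂ) (hK : IsCompact K)
    (hsub : K ⊆ {t : ℂ | ‖t * (1 - t)‖ < 1 / 4 ∧ 1 / 2 < t.re}) :
    TendstoUniformlyOn (fun n : ℕ => fun t : ℂ => fEns n t) (fun _ => 0) atTop K := by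
  rcases K.eq_empty_or_nonempty with rfl | hne
  · intro u _; simp
  obtain ⟨x, hxK, hmax⟩ := hK.exists_isMaxOn hne
    ((continuous_norm.comp (by continuity)).continuousOn :
      ContinuousOn (fun t : ℂ => ‖t * (1 - t)‖) K)
  set q : ℝ := 4 * ‖x * (1 - x)‖ with hq'
  have hq1 : q < 1 := by
    have := (hsub hxK).1
    rw [hq']; linarith
  have hq0 : 0 ≤ q := by positivity
  have hbK : ∀ t ∈ K, ∀ n : ℕ, ‖fEns n t‖ ≤ n * q^n := by
    intro t htK n
    refine (bound n t (hsub htK).2).trans ?_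
    have h4 : 4 * ‖t * (1 - t)‖ ≤ q := by
      have hmx := hmax htK
      simp only [Function.comp_apply, Set.mem_setOf_eq] at hmx
      rw [hq']; linarith
    gcongr
  have hlim : Tendsto (fun n : ℕ => (n : ℝ) * q^n) atTop (nhds 0) := by
    have hs := (summable_pow_mul_geometric_of_norm_lt_one 1 (r := q)
      (by rwa [Real.norm_eq_abs, abs_of_nonneg hq0])).tendsto_atTop_zero
    simpa using hs
  rw [Metric.tendstoUniformlyOn_iff]
  intro ε hε
  filter_upwards [hlim.eventually_lt_const hε] with n hn t htK
  have h1 := hbK t htK n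
  rw [dist_comm, dist_zero_right]
  linarith

/-- Uniform convergence on compact subsets of each lobe of the convergence region:
`f_n → 1` uniformly on compact subsets of `{|t(1-t)| < 1/4, Re t < 1/2}` and
`f_n → 0` uniformly on compact subsets of `{|t(1-t)| < 1/4, Re t > 1/2}`. -/
theorem fEns_uniform_convergence (K : Set ℂ) (hK : IsCompact K) :
    (K ⊆ {t : ℂ | ‖t * (1 - t)‖ < 1 / 4 ∧ t.re < 1 / 2} →
      TendstoUniformlyOn (fun n : ℕ => fun t : ℂ => fEns n t) (fun _ => 1) atTop K) ∧
    (K ⊆ {t : ℂ | ‖t * (1 - t)‖ < 1 / 4 ∧ 1 / 2 < t.re} →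
      TendstoUniformlyOn (fun n : ℕ => fun t : ℂ => fEns n t) (fun _ => 0) atTop K) := by
  constructor
  · intro hsub
    set K' : Set ℂ := (fun t : ℂ => 1 - t) '' K with hK'def
    have hK' : IsCompact K' := hK.image (by continuity)
    have hsub' : K' ⊆ {t : ℂ | ‖t * (1 - t)‖ < 1 / 4 ∧ 1 / 2 < t.re} := by
      rintro _ ⟨t, htK, rfl⟩
      obtain ⟨h1, h2⟩ := hsub htK
      constructor
      · show ‖(1 - t) * (1 - (1 - t))‖ < 1 / 4
        rw [show (1 : ℂ) - (1 - t) = t by ring, mul_comm]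
        exact h1
      · simp only [Set.mem_setOf_eq, Complex.sub_re, Complex.one_re]
        linarith
    have h0 := core K' hK' hsub'
    rw [Metric.tendstoUniformlyOn_iff] at h0 ⊢
    intro ε hε
    filter_upwards [h0 ε hε, eventually_ge_atTop 1] with n hn hn1 t htK
    obtain ⟨m, rfl⟩ : ∃ m, n = m + 1 := ⟨n - 1, by omega⟩
    have hmem : (1 - t) ∈ K' := ⟨t, htK, rfl⟩
    have hd := hn (1 - t) hmem
    rw [dist_comm, dist_zero_right] at hd
    have heq : (1 : ℂ) - fEns (m+1) t = fEns (m+1) (1 - t) := by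
      linear_combination -identity m t
    rw [dist_eq_norm, heq]
    exact hd
  · exact core K hK
end

section
/- Let β > 0 and let α > β/(2√2 + 2). Define P̄_n(z) = (1 − z/β)^n Σ_{j=0}^{n−1} (z/β)^j (n+j−1)!/(j!(n−1)!). Then there exists a point z₀ in the open disk {z ∈ ℂ : |z − β| < α} with |z₀² − βz₀| > β²/4, and for any such point the sequence (P̄_n(z₀))_{n≥1} does not converge; in particular sup_{|z−β|<α} |P̄_n(z)| does not tend to 0 as n → ∞. -/
open Filter

/-- The ensemble average polynomial
`P̄_n(z) = (1 - z/β)^n ∑_{j=0}^{n-1} (z/β)^j (n+j-1)!/(j!(n-1)!)`. -/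
noncomputable def ensembleAvg (n : ℕ) (β : ℂ) (z : ℂ) : ℂ :=
  (1 - z / β) ^ n * ∑ j ∈ Finset.range n,
    (z / β) ^ j *
      ((Nat.factorial (n + j - 1) : ℂ) /
        ((Nat.factorial j : ℂ) * (Nat.factorial (n - 1) : ℂ)))

noncomputable def eaS (w : ℂ) (n : ℕ) : ℂ :=
  ∑ j ∈ Finset.range (n + 1), ((n + j).choose j : ℂ) * w ^ j

lemma coeff_eq (n j : ℕ) :
    ((Nat.factorial (n + 1 + j - 1) : ℂ) /
        ((Nat.factorial j : ℂ) * (Nat.factorial (n + 1 - 1) : ℂ)))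
      = ((n + j).choose j : ℂ) := by
  have h1 : n + 1 + j - 1 = n + j := by omega
  have h2 : n + 1 - 1 = n := by omega
  rw [h1, h2]
  have h := Nat.choose_mul_factorial_mul_factorial (Nat.le_add_left j n)
  have h3 : n + j - j = n := by omega
  rw [h3] at h
  have hc := congrArg (Nat.cast : ℕ → ℂ) h
  push_cast at hc
  have hj : (Nat.factorial j : ℂ) ≠ 0 := Nat.cast_ne_zero.2 (Nat.factorial_ne_zero j)
  have hn : (Nat.factorial n : ℂ) ≠ 0 := Nat.cast_ne_zero.2 (Nat.factorial_ne_zero n)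
  rw [div_eq_iff (mul_ne_zero hj hn)]
  linear_combination -hc

lemma ensembleAvg_eq (β z : ℂ) (n : ℕ) :
    ensembleAvg (n + 1) β z = (1 - z / β) ^ (n + 1) * eaS (z / β) n := by
  unfold ensembleAvg eaS
  congr 1
  refine Finset.sum_congr rfl fun j _ => ?_
  rw [coeff_eq, mul_comm]

lemma choose_double (n : ℕ) :
    (2 * n + 2).choose (n + 1) = 2 * (2 * n + 1).choose (n + 1) := by
  have h1 : (2 * n + 1 + 1).choose (n + 1) =
      (2 * n + 1).choose n + (2 * n + 1).choose (n + 1) :=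
    Nat.choose_succ_succ (2 * n + 1) n
  have h2 : (2 * n + 1).choose n = (2 * n + 1).choose (n + 1) := by
    have := Nat.choose_symm (show n + 1 ≤ 2 * n + 1 by omega)
    have h3 : 2 * n + 1 - (n + 1) = n := by omega
    rw [h3] at this
    exact this
  have h1' : (2 * n + 2).choose (n + 1) =
      (2 * n + 1).choose n + (2 * n + 1).choose (n + 1) := by
    rw [show 2 * n + 2 = 2 * n + 1 + 1 from by omega]; exact h1
  omega

lemma eaS_rec (w : ℂ) (n : ℕ) :
    (1 - w) * eaS w (n + 1) =
      eaS w n + ((2 * n + 1).choose (n + 1) : ℂ) * w ^ (n + 1)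
        - ((2 * n + 2).choose (n + 1) : ℂ) * w ^ (n + 2) := by
  have hsplit : eaS w (n + 1) =
      (∑ k ∈ Finset.range (n + 1), ((n + 1 + (k + 1)).choose (k + 1) : ℂ) * w ^ (k + 1)) + 1 := by
    unfold eaS
    rw [Finset.sum_range_succ']
    simp
  have hP : ∀ k : ℕ, ((n + 1 + (k + 1)).choose (k + 1) : ℂ)
      = ((n + (k + 1)).choose (k + 1) : ℂ) + ((n + 1 + k).choose k : ℂ) := by
    intro k
    have : (n + 1 + (k + 1)).choose (k + 1) = (n + k + 1).choose k + (n + k + 1).choose (k + 1) := by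
      have h := Nat.choose_succ_succ (n + k + 1) k
      have : n + 1 + (k + 1) = n + k + 1 + 1 := by omega
      rw [this]
      exact h
    rw [this]
    push_cast
    have e1 : n + (k + 1) = n + k + 1 := by omega
    have e2 : n + 1 + k = n + k + 1 := by omega
    rw [e1, e2]
    ring
  have hSA : (∑ k ∈ Finset.range (n + 1), ((n + (k + 1)).choose (k + 1) : ℂ) * w ^ (k + 1))
      = eaS w n + ((2 * n + 1).choose (n + 1) : ℂ) * w ^ (n + 1) - 1 := by
    have e1 : (∑ j ∈ Finset.range (n + 2), ((n + j).choose j : ℂ) * w ^ j)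
        = (∑ k ∈ Finset.range (n + 1), ((n + (k + 1)).choose (k + 1) : ℂ) * w ^ (k + 1)) + 1 := by
      rw [Finset.sum_range_succ']
      simp
    have e2 : (∑ j ∈ Finset.range (n + 2), ((n + j).choose j : ℂ) * w ^ j)
        = eaS w n + ((n + (n + 1)).choose (n + 1) : ℂ) * w ^ (n + 1) := by
      rw [Finset.sum_range_succ]
      rfl
    have e3 : n + (n + 1) = 2 * n + 1 := by omega
    rw [e3] at e2
    linear_combination e2 - e1
  have hSB : (∑ k ∈ Finset.range (n + 1), ((n + 1 + k).choose k : ℂ) * w ^ (k + 1))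
      = w * (eaS w (n + 1) - ((2 * n + 2).choose (n + 1) : ℂ) * w ^ (n + 1)) := by
    have e2 : eaS w (n + 1)
        = (∑ k ∈ Finset.range (n + 1), ((n + 1 + k).choose k : ℂ) * w ^ k)
          + ((n + 1 + (n + 1)).choose (n + 1) : ℂ) * w ^ (n + 1) := by
      unfold eaS
      rw [Finset.sum_range_succ]
    have e3 : n + 1 + (n + 1) = 2 * n + 2 := by omega
    rw [e3] at e2
    calc (∑ k ∈ Finset.range (n + 1), ((n + 1 + k).choose k : ℂ) * w ^ (k + 1))
        = (∑ k ∈ Finset.range (n + 1), ((n + 1 + k).choose k : ℂ) * w ^ k) * w := by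
          rw [Finset.sum_mul]
          exact Finset.sum_congr rfl fun k _ => by ring
      _ = w * (eaS w (n + 1) - ((2 * n + 2).choose (n + 1) : ℂ) * w ^ (n + 1)) := by
          linear_combination -w * e2
  have hsplit2 : eaS w (n + 1)
      = (∑ k ∈ Finset.range (n + 1), ((n + (k + 1)).choose (k + 1) : ℂ) * w ^ (k + 1))
        + (∑ k ∈ Finset.range (n + 1), ((n + 1 + k).choose k : ℂ) * w ^ (k + 1)) + 1 := by
    rw [hsplit, ← Finset.sum_add_distrib]
    congr 1
    exact Finset.sum_congr rfl fun k _ => by rw [hP k]; ring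
  linear_combination hsplit2 + hSA + hSB

lemma ensembleAvg_diff (β z : ℂ) (n : ℕ) :
    ensembleAvg (n + 2) β z - ensembleAvg (n + 1) β z =
      ((2 * n + 1).choose (n + 1) : ℂ) * (1 - 2 * (z / β)) *
        ((1 - z / β) * (z / β)) ^ (n + 1) := by
  set w : ℂ := z / β with hw
  rw [show n + 2 = (n + 1) + 1 from rfl, ensembleAvg_eq, ensembleAvg_eq]
  have h := eaS_rec w n
  have hd : ((2 * n + 2).choose (n + 1) : ℂ) = 2 * ((2 * n + 1).choose (n + 1) : ℂ) := by
    exact_mod_cast congrArg (Nat.cast : ℕ → ℂ) (choose_double n)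
  rw [hd] at h
  have hpow : ((1 - w) * w) ^ (n + 1) = (1 - w) ^ (n + 1) * w ^ (n + 1) := mul_pow _ _ _
  calc (1 - w) ^ (n + 1 + 1) * eaS w (n + 1) - (1 - w) ^ (n + 1) * eaS w n
      = (1 - w) ^ (n + 1) * ((1 - w) * eaS w (n + 1)) - (1 - w) ^ (n + 1) * eaS w n := by ring
    _ = (1 - w) ^ (n + 1) * (((2 * n + 1).choose (n + 1) : ℂ) * w ^ (n + 1)
          - 2 * ((2 * n + 1).choose (n + 1) : ℂ) * w ^ (n + 2)) := by rw [h]; ring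
    _ = ((2 * n + 1).choose (n + 1) : ℂ) * (1 - 2 * w) * ((1 - w) * w) ^ (n + 1) := by
          rw [hpow]; ring

lemma diverges_at (β : ℝ) (hβ : 0 < β) (z₀ : ℂ)
    (hq : β ^ 2 / 4 < ‖z₀ ^ 2 - (β : ℂ) * z₀‖) :
    ¬ ∃ L : ℂ, Tendsto (fun n : ℕ => ensembleAvg n β z₀) atTop (nhds L) := by
  rintro ⟨L, hL⟩
  have hβ0 : (β : ℂ) ≠ 0 := by exact_mod_cast hβ.ne'
  set w : ℂ := z₀ / (β : ℂ) with hw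
  set q : ℝ := ‖(1 - w) * w‖ with hqdef
  have hq4 : 1 / 4 < q := by
    have h1 : (1 - w) * w = -(z₀ ^ 2 - (β : ℂ) * z₀) / ((β : ℂ)) ^ 2 := by
      rw [hw]; field_simp; ring
    rw [hqdef, h1, norm_div, norm_neg, norm_pow, Complex.norm_real, Real.norm_eq_abs, abs_of_pos hβ]
    rw [lt_div_iff₀ (by positivity)]
    calc 1 / 4 * β ^ 2 = β ^ 2 / 4 := by ring
      _ < _ := hq
  have hq0 : 0 < q := lt_trans (by norm_num) hq4
  have hw2 : (1 : ℂ) - 2 * w ≠ 0 := by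
    intro h
    have hw12 : w = 1 / 2 := by linear_combination -h / 2
    rw [hqdef, hw12] at hq4
    norm_num at hq4
  -- difference tends to 0
  have hd0 : Tendsto (fun n : ℕ => ensembleAvg (n + 2) β z₀ - ensembleAvg (n + 1) β z₀)
      atTop (nhds 0) := by
    have h2 : Tendsto (fun n : ℕ => ensembleAvg (n + 2) β z₀) atTop (nhds L) :=
      hL.comp (tendsto_add_atTop_nat 2)
    have h1 : Tendsto (fun n : ℕ => ensembleAvg (n + 1) β z₀) atTop (nhds L) :=
      hL.comp (tendsto_add_atTop_nat 1)
    simpa using h2.sub h1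
  have habs : Tendsto (fun n : ℕ =>
      ‖ensembleAvg (n + 2) β z₀ - ensembleAvg (n + 1) β z₀‖) atTop (nhds 0) := by
    have := hd0.norm
    simpa using this
  set r : ℝ := 1 / (4 * q) with hrdef
  have hr0 : 0 ≤ r := by positivity
  have hr1 : r < 1 := by
    rw [hrdef, div_lt_one (by positivity)]; linarith
  have hg : Tendsto (fun n : ℕ => ((n : ℝ) + 1) * r ^ (n + 1)) atTop (nhds 0) := by
    have h0 := tendsto_self_mul_const_pow_of_lt_one hr0 hr1
    have h1 := h0.comp (tendsto_add_atTop_nat 1)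
    refine h1.congr fun n => ?_
    simp only [Function.comp]
    push_cast
    ring
  have hu : Tendsto (fun n : ℕ =>
      ‖ensembleAvg (n + 2) β z₀ - ensembleAvg (n + 1) β z₀‖
        * (((n : ℝ) + 1) * r ^ (n + 1))) atTop (nhds 0) := by
    simpa using habs.mul hg
  set c : ℝ := ‖1 - 2 * w‖ / 6 with hcdef
  have hc0 : 0 < c := by
    rw [hcdef]
    have : 0 < ‖1 - 2 * w‖ := norm_pos_iff.2 hw2
    linarith
  have hlb : ∀ n : ℕ, c ≤ ‖ensembleAvg (n + 2) β z₀ - ensembleAvg (n + 1) β z₀‖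
      * (((n : ℝ) + 1) * r ^ (n + 1)) := by
    intro n
    rw [ensembleAvg_diff, norm_mul, norm_mul, norm_pow, Complex.norm_natCast]
    rw [← hw, ← hqdef]
    -- goal: c ≤ C * |1-2w| * q^(n+1) * ((n+1) * r^(n+1))
    have hnat : 4 ^ (n + 1) ≤ 6 * (n + 1) * ((2 * n + 1).choose (n + 1)) := by
      have h1 := Nat.four_pow_le_two_mul_add_one_mul_central_binom (n + 1)
      have h2 : (2 * (n + 1)).choose (n + 1) = 2 * ((2 * n + 1).choose (n + 1)) := by
        rw [show 2 * (n + 1) = 2 * n + 2 from by omega]; exact choose_double n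
      calc 4 ^ (n + 1) ≤ (2 * (n + 1) + 1) * (2 * (n + 1)).choose (n + 1) := h1
        _ = (2 * n + 3) * (2 * ((2 * n + 1).choose (n + 1))) := by rw [h2]; ring_nf
        _ ≤ 6 * (n + 1) * ((2 * n + 1).choose (n + 1)) := by
            have : (2 * n + 3) * 2 ≤ 6 * (n + 1) := by omega
            calc (2 * n + 3) * (2 * ((2 * n + 1).choose (n + 1)))
                = ((2 * n + 3) * 2) * ((2 * n + 1).choose (n + 1)) := by ring
              _ ≤ 6 * (n + 1) * ((2 * n + 1).choose (n + 1)) :=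
                  Nat.mul_le_mul_right _ this
    have hnatR : (4 : ℝ) ^ (n + 1) ≤ 6 * ((n : ℝ) + 1) * (((2 * n + 1).choose (n + 1) : ℕ) : ℝ) := by
      exact_mod_cast hnat
    have hqr : q ^ (n + 1) * r ^ (n + 1) = (1 / 4) ^ (n + 1) := by
      rw [← mul_pow, hrdef]
      congr 1
      field_simp
    have key : (((2 * n + 1).choose (n + 1) : ℕ) : ℝ) * ‖1 - 2 * w‖ * q ^ (n + 1)
        * (((n : ℝ) + 1) * r ^ (n + 1))
        = ‖1 - 2 * w‖ * ((((2 * n + 1).choose (n + 1) : ℕ) : ℝ) * ((n : ℝ) + 1)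
            * (1 / 4) ^ (n + 1)) := by
      calc (((2 * n + 1).choose (n + 1) : ℕ) : ℝ) * ‖1 - 2 * w‖ * q ^ (n + 1)
            * (((n : ℝ) + 1) * r ^ (n + 1))
          = ‖1 - 2 * w‖ * ((((2 * n + 1).choose (n + 1) : ℕ) : ℝ) * ((n : ℝ) + 1)
            * (q ^ (n + 1) * r ^ (n + 1))) := by ring
        _ = _ := by rw [hqr]
    rw [key, hcdef]
    have habs0 : 0 ≤ ‖1 - 2 * w‖ := norm_nonneg _
    have hfrac : (1 : ℝ) / 6 ≤ (((2 * n + 1).choose (n + 1) : ℕ) : ℝ) * ((n : ℝ) + 1)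
        * (1 / 4) ^ (n + 1) := by
      set p : ℝ := (1 / 4 : ℝ) ^ (n + 1) with hp
      have hp0 : 0 < p := by positivity
      have h4p : (4 : ℝ) ^ (n + 1) * p = 1 := by
        rw [hp, ← mul_pow]; norm_num
      nlinarith [mul_le_mul_of_nonneg_right hnatR hp0.le]
    calc ‖1 - 2 * w‖ / 6 = ‖1 - 2 * w‖ * (1 / 6) := by ring
      _ ≤ _ := by
          apply mul_le_mul_of_nonneg_left hfrac habs0
  have hev := hu.eventually_lt_const hc0
  rcases hev.exists with ⟨n, hn⟩
  exact absurd (hlb n) (not_le.2 hn)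

lemma exists_pt (β α : ℝ) (hβ : 0 < β) (hα : β / (2 * Real.sqrt 2 + 2) < α) :
    ∃ z₀ : ℂ, ‖z₀ - β‖ < α ∧
      β ^ 2 / 4 < ‖z₀ ^ 2 - (β : ℂ) * z₀‖ := by
  set s := Real.sqrt 2 with hs
  have hs2 : s ^ 2 = 2 := Real.sq_sqrt (by norm_num)
  have hs1 : 1 < s := by nlinarith [Real.sqrt_nonneg 2]
  have hden : 0 < 2 * s + 2 := by linarith
  set t := β / (2 * s + 2) with ht
  have ht0 : 0 < t := div_pos hβ hden
  have htα : t < α := hα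
  set ρ := (t + α) / 2 with hρ
  have hρt : t < ρ := by rw [hρ]; linarith
  have hρα : ρ < α := by rw [hρ]; linarith
  have hρ0 : 0 < ρ := lt_trans ht0 hρt
  have hβρ : β < ρ * (2 * s + 2) := by
    have := mul_lt_mul_of_pos_right hρt hden
    rw [ht] at this
    calc β = β / (2 * s + 2) * (2 * s + 2) := by field_simp
      _ < ρ * (2 * s + 2) := this
  refine ⟨((β + ρ : ℝ) : ℂ), ?_, ?_⟩
  · have h1 : ((β + ρ : ℝ) : ℂ) - (β : ℂ) = ((ρ : ℝ) : ℂ) := by push_cast; ring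
    rw [h1, Complex.norm_real, Real.norm_eq_abs, abs_of_pos hρ0]; exact hρα
  · have h1 : ((β + ρ : ℝ) : ℂ) ^ 2 - (β : ℂ) * ((β + ρ : ℝ) : ℂ)
        = (((β + ρ) * ρ : ℝ) : ℂ) := by push_cast; ring
    rw [h1, Complex.norm_real, Real.norm_eq_abs, abs_of_pos (by positivity)]
    nlinarith [mul_lt_mul_of_pos_left hβρ hβ, mul_lt_mul_of_pos_left hβρ hρ0, hs2, hρ0, hβ]

lemma continuous_ea (n : ℕ) (β : ℂ) : Continuous (fun z : ℂ => ensembleAvg n β z) := by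
  unfold ensembleAvg
  fun_prop

/-- If `α > β/(2√2+2)` then the open disk `|z - β| < α` contains a point outside the
closure of the convergence region, `P̄_n` diverges at every such point, and consequently
`sup_{|z-β|<α} |P̄_n(z)|` does not tend to `0`. -/
theorem ensembleAvg_divergence_large_disk (β α : ℝ) (hβ : 0 < β)
    (hα : β / (2 * Real.sqrt 2 + 2) < α) :
    (∃ z₀ : ℂ, ‖z₀ - β‖ < α ∧
      β ^ 2 / 4 < ‖z₀ ^ 2 - (β : ℂ) * z₀‖) ∧
    (∀ z₀ : ℂ, ‖z₀ - β‖ < α →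
      β ^ 2 / 4 < ‖z₀ ^ 2 - (β : ℂ) * z₀‖ →
      ¬ ∃ L : ℂ, Tendsto (fun n : ℕ => ensembleAvg n β z₀) atTop (nhds L)) ∧
    ¬ Tendsto (fun n : ℕ => ⨆ z ∈ Metric.ball (β : ℂ) α, ‖ensembleAvg n β z‖)
        atTop (nhds 0) := by
  obtain ⟨z₀, hz₁, hz₂⟩ := exists_pt β α hβ hα
  refine ⟨⟨z₀, hz₁, hz₂⟩, fun z hz hz' => diverges_at β hβ z hz', ?_⟩
  intro hT
  have hz₀ball : z₀ ∈ Metric.ball (β : ℂ) α := by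
    rw [Metric.mem_ball, Complex.dist_eq]; exact hz₁
  -- each sup bounds the value at z₀
  have key : ∀ n : ℕ, ‖ensembleAvg n β z₀‖
      ≤ ⨆ z ∈ Metric.ball (β : ℂ) α, ‖ensembleAvg n β z‖ := by
    intro n
    have hb : BddAbove (Set.range fun z : ℂ =>
        ⨆ _ : z ∈ Metric.ball (β : ℂ) α, ‖ensembleAvg n β z‖) := by
      have hcomp : IsCompact (Metric.closedBall (β : ℂ) α) := isCompact_closedBall _ _
      have himg : BddAbove ((fun z : ℂ => ‖ensembleAvg n β z‖) ''
          Metric.closedBall (β : ℂ) α) :=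
        hcomp.bddAbove_image ((continuous_norm.comp (continuous_ea n β)).continuousOn)
      obtain ⟨M, hM⟩ := himg
      refine ⟨max M 0, ?_⟩
      rintro y ⟨z, rfl⟩
      show (⨆ _ : z ∈ Metric.ball (β : ℂ) α, ‖ensembleAvg n β z‖) ≤ max M 0
      by_cases hz : z ∈ Metric.ball (β : ℂ) α
      · rw [ciSup_pos hz]
        have hzc : z ∈ Metric.closedBall (β : ℂ) α := Metric.ball_subset_closedBall hz
        exact le_trans (hM ⟨z, hzc, rfl⟩) (le_max_left _ _)
      · haveI : IsEmpty (z ∈ Metric.ball (β : ℂ) α) := ⟨hz⟩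
        rw [Real.iSup_of_isEmpty]
        exact le_max_right _ _
    have h1 := le_ciSup hb z₀
    rwa [ciSup_pos hz₀ball] at h1
  have habs : Tendsto (fun n : ℕ => ‖ensembleAvg n β z₀‖) atTop (nhds 0) :=
    squeeze_zero (fun n => norm_nonneg _) key hT
  have hconv : Tendsto (fun n : ℕ => ensembleAvg n β z₀) atTop (nhds 0) := by
    rw [tendsto_zero_iff_norm_tendsto_zero]
    simpa using habs
  exact diverges_at β hβ z₀ hz₂ ⟨0, hconv⟩
end
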